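/- Let R be a commutative ring, m ≥ 2, and let Φ be a 2 × m matrix over R whose j-th column equals d_j · c_j, where d_j ∈ R and c_j ∈ R² for j = 1, …, m. Assume: d₁ divides d₂; d₂ divides d_j for every j ≥ 3; and the 2 × 2 matrix with columns c₁ and c₂ is invertible over R. Then Φ is diagonalizable: there exist an invertible 2 × 2 matrix Q and an invertible m × m matrix P over R such that Q · Φ · P is the 2 × m block matrix [diag(d₁, d₂) | 0]. -/

import Mathlib

/-- Let `R` be a commutative ring, `m ≥ 2`, and let `Φ` be a
`2 × m` matrix whose `j`-th column is `d j • c j`.  Assume `d₁ ∣ d₂`, `d₂ ∣ d j`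
for `j ≥ 3`, and that the `2 × 2` matrix with columns `c₁, c₂` is invertible.
Then `Φ` is diagonalizable: there are invertible matrices `Q` (2 × 2) and
`P` (m × m) with `Q * Φ * P = [diag(d₁, d₂) | 0]`. -/
theorem structural_hom_diagonalizable {R : Type*} [CommRing R] (m : ℕ) (hm : 2 ≤ m)
    (Φ : Matrix (Fin 2) (Fin m) R) (d : Fin m → R) (c : Fin m → Fin 2 → R)
    (hΦ : ∀ (i : Fin 2) (j : Fin m), Φ i j = d j * c j i)
    (h12 : d ⟨0, by omega⟩ ∣ d ⟨1, by omega⟩)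
    (h2j : ∀ j : Fin m, 2 ≤ (j : ℕ) → d ⟨1, by omega⟩ ∣ d j)
    (hC : IsUnit (Matrix.of fun i s : Fin 2 => c ⟨(s : ℕ), by omega⟩ i)) :
    ∃ (Q : Matrix (Fin 2) (Fin 2) R) (P : Matrix (Fin m) (Fin m) R),
      IsUnit Q ∧ IsUnit P ∧
      Q * Φ * P = Matrix.of fun (i : Fin 2) (j : Fin m) =>
        if (j : ℕ) = (i : ℕ) then d j else 0 := by
  classical
  have h2m : 0 < m := by omega
  set e0 : Fin m := ⟨0, by omega⟩ with he0
  set e1 : Fin m := ⟨1, by omega⟩ with he1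
  obtain ⟨s, hs⟩ := h12
  have hs' : d e1 = d e0 * s := hs
  -- choice of t j with d j = d e1 * t j for j ≥ 2
  have ht' : ∀ j : Fin m, 2 ≤ (j : ℕ) → ∃ t, d j = d e1 * t := fun j hj => h2j j hj
  set t : Fin m → R := fun j =>
    if h : 2 ≤ (j : ℕ) then (ht' j h).choose else 0 with htdef
  have ht : ∀ j : Fin m, 2 ≤ (j : ℕ) → d j = d e1 * t j := by
    intro j hj
    simp only [htdef, dif_pos hj]
    exact (ht' j hj).choose_spec
  set C : Matrix (Fin 2) (Fin 2) R :=
    Matrix.of fun i s : Fin 2 => c ⟨(s : ℕ), by omega⟩ i with hCdef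
  have hCu : IsUnit C := hC
  set u := hCu.unit with hu
  set Q : Matrix (Fin 2) (Fin 2) R := ↑u⁻¹ with hQdef
  have hQC : Q * C = 1 := by
    rw [hQdef]
    have := u.inv_mul
    rwa [hCu.unit_spec] at this
  have hQunit : IsUnit Q := (u⁻¹).isUnit
  -- v j i = (Q *ᵥ c j) i
  set v : Fin m → Fin 2 → R := fun j i => ∑ k, Q i k * c j k with hvdef
  have hA : ∀ (i : Fin 2) (j : Fin m), (Q * Φ) i j = d j * v j i := by
    intro i j
    rw [Matrix.mul_apply, hvdef, Finset.mul_sum]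
    apply Finset.sum_congr rfl
    intro k _
    rw [hΦ]; ring
  have hvs : ∀ (s2 : Fin 2) (i : Fin 2),
      v ⟨(s2 : ℕ), by omega⟩ i = if i = s2 then 1 else 0 := by
    intro s2 i
    have : v ⟨(s2 : ℕ), by omega⟩ i = (Q * C) i s2 := by
      rw [Matrix.mul_apply]
      rfl
    rw [this, hQC, Matrix.one_apply]
  have hv0 : ∀ i : Fin 2, v e0 i = if i = 0 then 1 else 0 := fun i => hvs 0 i
  have hv1 : ∀ i : Fin 2, v e1 i = if i = 1 then 1 else 0 := fun i => hvs 1 i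
  -- the column operations
  set n0 : Fin m → R := fun j => if 2 ≤ (j : ℕ) then -(s * t j * v j 0) else 0 with hn0
  set n1 : Fin m → R := fun j => if 2 ≤ (j : ℕ) then -(t j * v j 1) else 0 with hn1
  set N : Matrix (Fin m) (Fin m) R := fun j' j =>
    (if j' = e0 then n0 j else 0) + (if j' = e1 then n1 j else 0) with hNdef
  have hn0e0 : n0 e0 = 0 := by simp [hn0, he0]
  have hn0e1 : n0 e1 = 0 := by simp [hn0, he1]
  have hn1e0 : n1 e0 = 0 := by simp [hn1, he0]
  have hn1e1 : n1 e1 = 0 := by simp [hn1, he1]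
  have hNN : N * N = 0 := by
    ext j' j
    rw [Matrix.mul_apply]
    apply Finset.sum_eq_zero
    intro k _
    by_cases hk0 : k = e0
    · subst hk0
      have : N j' e0 = 0 := by simp [hNdef, hn0e0, hn1e0]
      rw [this, zero_mul]
    · by_cases hk1 : k = e1
      · subst hk1
        have : N j' e1 = 0 := by simp [hNdef, hn0e1, hn1e1]
        rw [this, zero_mul]
      · have : N k j = 0 := by simp [hNdef, hk0, hk1]
        rw [this, mul_zero]
  have hPP' : (1 + N) * (1 - N) = 1 := by
    have : (1 + N) * (1 - N) = 1 - N * N := by noncomm_ring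
    rw [this, hNN, sub_zero]
  have hP'P : (1 - N) * (1 + N) = 1 := by
    have : (1 - N) * (1 + N) = 1 - N * N := by noncomm_ring
    rw [this, hNN, sub_zero]
  refine ⟨Q, 1 + N, hQunit, ⟨⟨1 + N, 1 - N, hPP', hP'P⟩, rfl⟩, ?_⟩
  ext i j
  have key : ((Q * Φ * (1 + N) : Matrix (Fin 2) (Fin m) R)) i j
      = d j * v j i + d e0 * v e0 i * n0 j + d e1 * v e1 i * n1 j := by
    rw [Matrix.mul_apply]
    have step : ∀ k : Fin m, (Q * Φ) i k * (1 + N) k j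
        = (if k = j then (Q * Φ) i k else 0)
          + (if k = e0 then (Q * Φ) i k * n0 j else 0)
          + (if k = e1 then (Q * Φ) i k * n1 j else 0) := by
      intro k
      simp only [Matrix.add_apply, Matrix.one_apply]; simp only [hNdef]
      split_ifs <;> ring
    rw [Finset.sum_congr rfl fun k _ => step k]
    simp only [Finset.sum_add_distrib, Finset.sum_ite_eq', Finset.mem_univ, if_true]
    rw [hA, hA, hA]
  rw [key]
  simp only [Matrix.of_apply]
  by_cases hj2 : 2 ≤ (j : ℕ)
  · have hjd : d j = d e1 * t j := ht j hj2
    have hrhs : ¬ ((j : ℕ) = (i : ℕ)) := by omega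
    rw [if_neg hrhs]
    simp only [hn0, hn1, if_pos hj2]
    fin_cases i <;>
      simp only [hv0, hv1, hjd, hs'] <;> norm_num <;> ring
  · -- j = e0 or j = e1
    have hrange : (j : ℕ) = 0 ∨ (j : ℕ) = 1 := by omega
    have hn0j : n0 j = 0 := by simp [hn0, hj2]
    have hn1j : n1 j = 0 := by simp [hn1, hj2]
    rw [hn0j, hn1j, mul_zero, mul_zero, add_zero, add_zero]
    rcases hrange with h | h
    · have : j = e0 := by apply Fin.ext; simpa using h
      subst this
      fin_cases i <;> simp [hv0, h]
    · have : j = e1 := by apply Fin.ext; simpa using h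
      subst this
      fin_cases i <;> simp [hv1, h]
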